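/- Let G be a finite subgroup of PGL(2, K) for K a field of characteristic ≠ 2, such that every non-identity element of G has order two. Then G is isomorphic to (ℤ/2ℤ)^r for some r ∈ {0, 1, 2}. -/

import Mathlib

open Matrix

/-- `PGL(2, K)`, the quotient of `GL(2, K)` by its centre (the scalar matrices). -/
abbrev PGL2 (K : Type*) [Field K] : Type _ :=
  GL (Fin 2) K ⧸ Subgroup.center (GL (Fin 2) K)

/-- The class in `PGL(2, K)` of a matrix with non-zero determinant. -/
noncomputable def pgl2 {K : Type*} [Field K] (M : Matrix (Fin 2) (Fin 2) K)
    (h : M.det ≠ 0) : PGL2 K :=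
  QuotientGroup.mk (Matrix.GeneralLinearGroup.mkOfDetNeZero M h)

/-- The class of `[[0, f], [1, 0]]` in `PGL(2, K)`. -/
noncomputable def sigmaPGL {K : Type*} [Field K] (f : Kˣ) : PGL2 K :=
  pgl2 !![0, (f : K); 1, 0] (by simp [Matrix.det_fin_two_of])
section Aux

variable {K : Type*} [Field K]

theorem aux_center (N : GL (Fin 2) K) :
    N ∈ Subgroup.center (GL (Fin 2) K) ↔ ∃ c : K, (N : Matrix (Fin 2) (Fin 2) K) = c • 1 := by
  constructor
  · intro hN
    rw [Subgroup.mem_center_iff] at hN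
    have hE : (!![1,1;0,1] : Matrix (Fin 2) (Fin 2) K).det ≠ 0 := by
      simp [Matrix.det_fin_two_of]
    have hF : (!![1,0;1,1] : Matrix (Fin 2) (Fin 2) K).det ≠ 0 := by
      simp [Matrix.det_fin_two_of]
    have h1 := congrArg (Units.val) (hN (Matrix.GeneralLinearGroup.mkOfDetNeZero _ hE))
    have h2 := congrArg (Units.val) (hN (Matrix.GeneralLinearGroup.mkOfDetNeZero _ hF))
    simp only [Units.val_mul] at h1 h2
    have h1' : !![1,1;0,1] * (N : Matrix (Fin 2) (Fin 2) K)
        = (N : Matrix (Fin 2) (Fin 2) K) * !![1,1;0,1] := h1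
    have h2' : !![1,0;1,1] * (N : Matrix (Fin 2) (Fin 2) K)
        = (N : Matrix (Fin 2) (Fin 2) K) * !![1,0;1,1] := h2
    refine ⟨(N : Matrix (Fin 2) (Fin 2) K) 0 0, ?_⟩
    have e00 := congrFun (congrFun h1' 0) 0
    have e01 := congrFun (congrFun h1' 0) 1
    have f00 := congrFun (congrFun h2' 0) 0
    simp [Matrix.mul_apply, Fin.sum_univ_two] at e00 e01 f00
    ext i j
    fin_cases i <;> fin_cases j <;> simp [Matrix.one_apply, e00, f00]
    linear_combination e01
  · rintro ⟨c, hc⟩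
    rw [Subgroup.mem_center_iff]
    intro g
    ext : 1
    simp only [Units.val_mul, hc, Matrix.smul_mul, Matrix.mul_smul, Matrix.one_mul,
      Matrix.mul_one]

theorem aux_mk_eq_of_smul (A B : GL (Fin 2) K) (β : K)
    (h : (A : Matrix (Fin 2) (Fin 2) K) = β • (B : Matrix (Fin 2) (Fin 2) K)) :
    (QuotientGroup.mk A : PGL2 K) = QuotientGroup.mk B := by
  symm
  rw [QuotientGroup.eq]
  rw [aux_center]
  refine ⟨β, ?_⟩
  have : ((B⁻¹ * A : GL (Fin 2) K) : Matrix (Fin 2) (Fin 2) K)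
      = (B⁻¹ : GL (Fin 2) K) * (A : Matrix (Fin 2) (Fin 2) K) := rfl
  rw [this, h, Matrix.mul_smul]
  congr 1
  have : ((B⁻¹ * B : GL (Fin 2) K) : Matrix (Fin 2) (Fin 2) K) = 1 := by
    rw [inv_mul_cancel]; rfl
  rw [← this]; rfl

theorem aux_CH (A : Matrix (Fin 2) (Fin 2) K) :
    A * A = A.trace • A - A.det • (1 : Matrix (Fin 2) (Fin 2) K) := by
  ext i j
  fin_cases i <;> fin_cases j <;>
    simp [Matrix.mul_apply, Fin.sum_univ_two, Matrix.trace_fin_two, Matrix.det_fin_two,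
      Matrix.one_apply] <;> ring

theorem aux_trace_zero (x : PGL2 K) (hx1 : x ≠ 1) (hxx : x * x = 1)
    (A : GL (Fin 2) K) (hA : (QuotientGroup.mk A : PGL2 K) = x) :
    Matrix.trace (A : Matrix (Fin 2) (Fin 2) K) = 0 := by
  have hmk : (QuotientGroup.mk (A * A) : PGL2 K) = 1 := by
    rw [QuotientGroup.mk_mul, hA, hxx]
  rw [QuotientGroup.eq_one_iff] at hmk
  obtain ⟨c, hc⟩ := (aux_center _).mp hmk
  have hc' : (A : Matrix (Fin 2) (Fin 2) K) * (A : Matrix (Fin 2) (Fin 2) K) = c • 1 := hc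
  rw [aux_CH] at hc'
  have key : Matrix.trace (A : Matrix (Fin 2) (Fin 2) K) • (A : Matrix (Fin 2) (Fin 2) K)
      = (c + (A : Matrix (Fin 2) (Fin 2) K).det) • (1 : Matrix (Fin 2) (Fin 2) K) := by
    rw [add_smul]
    rw [sub_eq_iff_eq_add] at hc'
    rw [hc']
  by_contra htr
  apply hx1
  rw [← hA, QuotientGroup.eq_one_iff, aux_center]
  set t := Matrix.trace (A : Matrix (Fin 2) (Fin 2) K)
  refine ⟨t⁻¹ * (c + (A : Matrix (Fin 2) (Fin 2) K).det), ?_⟩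
  have := congrArg (fun M => t⁻¹ • M) key
  simpa [smul_smul, inv_mul_cancel₀ htr] using this

theorem aux_pm (A B : GL (Fin 2) K)
    (h : (QuotientGroup.mk A : PGL2 K) * QuotientGroup.mk B
        = QuotientGroup.mk B * QuotientGroup.mk A) :
    (A : Matrix (Fin 2) (Fin 2) K) * B = (B : Matrix (Fin 2) (Fin 2) K) * A ∨
    (A : Matrix (Fin 2) (Fin 2) K) * B = -((B : Matrix (Fin 2) (Fin 2) K) * A) := by
  have hmk : (QuotientGroup.mk (A * B) : PGL2 K) = QuotientGroup.mk (B * A) := by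
    rw [QuotientGroup.mk_mul, QuotientGroup.mk_mul, h]
  rw [QuotientGroup.eq] at hmk
  obtain ⟨c, hc⟩ := (aux_center _).mp hmk
  have hBA : ((B * A : GL (Fin 2) K) : Matrix (Fin 2) (Fin 2) K)
      = ((A * B : GL (Fin 2) K) : Matrix (Fin 2) (Fin 2) K)
        * (((A * B)⁻¹ * (B * A) : GL (Fin 2) K) : Matrix (Fin 2) (Fin 2) K) := by
    rw [← Units.val_mul]
    congr 1
    group
  rw [hc] at hBA
  have hBA' : (B : Matrix (Fin 2) (Fin 2) K) * A = c • ((A : Matrix (Fin 2) (Fin 2) K) * B) := by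
    rw [Units.val_mul, Units.val_mul] at hBA
    rw [hBA, mul_smul_comm, mul_one]
  have hda : (A : Matrix (Fin 2) (Fin 2) K).det ≠ 0 :=
    (((Matrix.isUnit_iff_isUnit_det _).mp ⟨A, rfl⟩).ne_zero)
  have hdb : (B : Matrix (Fin 2) (Fin 2) K).det ≠ 0 :=
    (((Matrix.isUnit_iff_isUnit_det _).mp ⟨B, rfl⟩).ne_zero)
  have hc2 : c ^ 2 = 1 := by
    have h1 : ((B : Matrix (Fin 2) (Fin 2) K) * A).det
        = c ^ 2 * ((A : Matrix (Fin 2) (Fin 2) K) * B).det := by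
      rw [hBA', Matrix.det_smul]
      norm_num
    rw [Matrix.det_mul, Matrix.det_mul] at h1
    have h3 : (c ^ 2 - 1) * ((A : Matrix (Fin 2) (Fin 2) K).det
        * (B : Matrix (Fin 2) (Fin 2) K).det) = 0 := by linear_combination -h1
    rcases mul_eq_zero.mp h3 with h4 | h4
    · linear_combination h4
    · rcases mul_eq_zero.mp h4 with h5 | h5
      · exact absurd h5 hda
      · exact absurd h5 hdb
  have : (c - 1) * (c + 1) = 0 := by linear_combination hc2
  rcases mul_eq_zero.mp this with h' | h'
  · left
    have : c = 1 := by linear_combination h'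
    rw [this, one_smul] at hBA'
    exact hBA'.symm
  · right
    have : c = -1 := by linear_combination h'
    rw [this] at hBA'
    rw [hBA']
    simp

theorem aux_prop (h2 : (2:K) ≠ 0) (p q r w x y : K)
    (hqy : q * y = x * r) (hpx : p * x = q * w) (hrw : r * w = p * y)
    (hne : ¬(p = 0 ∧ q = 0 ∧ r = 0)) :
    ∃ β : K, w = β * p ∧ x = β * q ∧ y = β * r := by
  by_cases hq : q ≠ 0
  · refine ⟨x / q, ?_, ?_, ?_⟩
    · field_simp
      linear_combination -hpx
    · field_simp
    · field_simp
      linear_combination hqy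
  · push_neg at hq
    by_cases hr : r ≠ 0
    · refine ⟨y / r, ?_, ?_, ?_⟩
      · field_simp
        linear_combination hrw
      · field_simp
        linear_combination -hqy
      · field_simp
    · push_neg at hr
      have hp : p ≠ 0 := fun hp => hne ⟨hp, hq, hr⟩
      have hx : x = 0 := by
        have : p * x = 0 := by rw [hpx, hq]; ring
        exact (mul_eq_zero.mp this).resolve_left hp
      have hy : y = 0 := by
        have : p * y = 0 := by rw [← hrw, hr]; ring
        exact (mul_eq_zero.mp this).resolve_left hp
      refine ⟨w / p, ?_, ?_, ?_⟩
      · field_simp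
      · rw [hx, hq, mul_zero]
      · rw [hy, hr, mul_zero]

theorem aux_commutant (h2 : (2:K) ≠ 0) (A B : Matrix (Fin 2) (Fin 2) K)
    (hA : A.trace = 0) (hB : B.trace = 0) (hA0 : A ≠ 0) (hc : A * B = B * A) :
    ∃ β : K, B = β • A := by
  rw [Matrix.trace_fin_two] at hA hB
  have hA11 : A 1 1 = -A 0 0 := by linear_combination hA
  have hB11 : B 1 1 = -B 0 0 := by linear_combination hB
  have e00 := congrFun (congrFun hc 0) 0
  have e01 := congrFun (congrFun hc 0) 1
  have e10 := congrFun (congrFun hc 1) 0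
  simp only [Matrix.mul_apply, Fin.sum_univ_two] at e00 e01 e10
  have hqy : A 0 1 * B 1 0 = B 0 1 * A 1 0 := by linear_combination e00
  have hpx : A 0 0 * B 0 1 = A 0 1 * B 0 0 := by
    have h : 2 * (A 0 0 * B 0 1 - A 0 1 * B 0 0) = 0 := by
      linear_combination e01 - A 0 1 * hB11 + B 0 1 * hA11
    rcases mul_eq_zero.mp h with h | h
    · exact absurd h h2
    · linear_combination h
  have hrw : A 1 0 * B 0 0 = A 0 0 * B 1 0 := by
    have h : 2 * (A 1 0 * B 0 0 - A 0 0 * B 1 0) = 0 := by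
      linear_combination e10 - B 1 0 * hA11 + A 1 0 * hB11
    rcases mul_eq_zero.mp h with h | h
    · exact absurd h h2
    · linear_combination h
  have hne : ¬(A 0 0 = 0 ∧ A 0 1 = 0 ∧ A 1 0 = 0) := by
    rintro ⟨hp, hq, hr⟩
    apply hA0
    ext i j
    fin_cases i <;> fin_cases j <;> simp_all
  obtain ⟨β, hw, hx, hy⟩ := aux_prop h2 (A 0 0) (A 0 1) (A 1 0) (B 0 0) (B 0 1) (B 1 0)
    (by linear_combination hqy) (by linear_combination hpx) (by linear_combination hrw) hne
  refine ⟨β, ?_⟩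
  ext i j
  fin_cases i <;> fin_cases j <;> simp only [Matrix.smul_apply, smul_eq_mul]
  · exact hw
  · exact hx
  · exact hy
  · show B 1 1 = β * A 1 1
    rw [hB11, hA11, hw]; ring

theorem aux_anticomm (h2 : (2:K) ≠ 0) (A B : GL (Fin 2) K)
    (htA : Matrix.trace (A : Matrix (Fin 2) (Fin 2) K) = 0)
    (htB : Matrix.trace (B : Matrix (Fin 2) (Fin 2) K) = 0)
    (hcomm : (QuotientGroup.mk A : PGL2 K) * QuotientGroup.mk B
        = QuotientGroup.mk B * QuotientGroup.mk A)
    (hne : (QuotientGroup.mk A : PGL2 K) ≠ QuotientGroup.mk B) :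
    (A : Matrix (Fin 2) (Fin 2) K) * B = -((B : Matrix (Fin 2) (Fin 2) K) * A) := by
  have hA0 : (A : Matrix (Fin 2) (Fin 2) K) ≠ 0 := by
    intro h0
    have := (((Matrix.isUnit_iff_isUnit_det _).mp ⟨A, rfl⟩).ne_zero)
    rw [h0] at this
    simp at this
  rcases aux_pm A B hcomm with h | h
  · exfalso
    obtain ⟨β, hβ⟩ := aux_commutant h2 _ _ htA htB hA0 h
    exact hne ((aux_mk_eq_of_smul B A β hβ).symm)
  · exact h

theorem aux_claim (h2 : (2:K) ≠ 0) (G : Subgroup (PGL2 K))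
    (hG : ∀ x ∈ G, x * x = 1)
    (habel : ∀ x ∈ G, ∀ y ∈ G, x * y = y * x)
    (a b c : PGL2 K) (haG : a ∈ G) (hbG : b ∈ G) (hcG : c ∈ G)
    (ha1 : a ≠ 1) (hb1 : b ≠ 1) (hab : a ≠ b) :
    c = 1 ∨ c = a ∨ c = b ∨ c = a * b := by
  by_contra hcon
  push_neg at hcon
  obtain ⟨hc1, hca, hcb, hcab⟩ := hcon
  obtain ⟨A, hA⟩ := QuotientGroup.mk_surjective a
  obtain ⟨B, hB⟩ := QuotientGroup.mk_surjective b
  obtain ⟨C, hC⟩ := QuotientGroup.mk_surjective c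
  have htA := aux_trace_zero a ha1 (hG a haG) A hA
  have htB := aux_trace_zero b hb1 (hG b hbG) B hB
  have htC := aux_trace_zero c hc1 (hG c hcG) C hC
  have hA0 : (A : Matrix (Fin 2) (Fin 2) K) ≠ 0 := by
    intro h0
    have := (((Matrix.isUnit_iff_isUnit_det _).mp ⟨A, rfl⟩).ne_zero)
    rw [h0] at this
    simp at this
  have hAB : (A : Matrix (Fin 2) (Fin 2) K) * (B : Matrix (Fin 2) (Fin 2) K)
      = -((B : Matrix (Fin 2) (Fin 2) K) * (A : Matrix (Fin 2) (Fin 2) K)) :=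
    aux_anticomm h2 A B htA htB (by rw [hA, hB]; exact habel a haG b hbG)
      (by rw [hA, hB]; exact hab)
  have hAC : (A : Matrix (Fin 2) (Fin 2) K) * (C : Matrix (Fin 2) (Fin 2) K)
      = -((C : Matrix (Fin 2) (Fin 2) K) * (A : Matrix (Fin 2) (Fin 2) K)) :=
    aux_anticomm h2 A C htA htC (by rw [hA, hC]; exact habel a haG c hcG)
      (by rw [hA, hC]; exact fun h => hca h.symm)
  -- B*C commutes with A
  have hcommBCA : ((B : Matrix (Fin 2) (Fin 2) K) * (C : Matrix (Fin 2) (Fin 2) K))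
        * (A : Matrix (Fin 2) (Fin 2) K)
      = (A : Matrix (Fin 2) (Fin 2) K)
        * ((B : Matrix (Fin 2) (Fin 2) K) * (C : Matrix (Fin 2) (Fin 2) K)) := by
    have hCA : (C : Matrix (Fin 2) (Fin 2) K) * (A : Matrix (Fin 2) (Fin 2) K)
        = -((A : Matrix (Fin 2) (Fin 2) K) * (C : Matrix (Fin 2) (Fin 2) K)) := by
      rw [hAC, neg_neg]
    calc (B : Matrix (Fin 2) (Fin 2) K) * (C : Matrix (Fin 2) (Fin 2) K)
          * (A : Matrix (Fin 2) (Fin 2) K)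
        = (B : Matrix (Fin 2) (Fin 2) K)
          * ((C : Matrix (Fin 2) (Fin 2) K) * (A : Matrix (Fin 2) (Fin 2) K)) := by
          rw [mul_assoc]
      _ = (B : Matrix (Fin 2) (Fin 2) K)
          * -((A : Matrix (Fin 2) (Fin 2) K) * (C : Matrix (Fin 2) (Fin 2) K)) := by
          rw [hCA]
      _ = -((B : Matrix (Fin 2) (Fin 2) K) * (A : Matrix (Fin 2) (Fin 2) K))
          * (C : Matrix (Fin 2) (Fin 2) K) := by
          rw [mul_neg, neg_mul, mul_assoc]
      _ = ((A : Matrix (Fin 2) (Fin 2) K) * (B : Matrix (Fin 2) (Fin 2) K))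
          * (C : Matrix (Fin 2) (Fin 2) K) := by rw [← hAB]
      _ = (A : Matrix (Fin 2) (Fin 2) K)
          * ((B : Matrix (Fin 2) (Fin 2) K) * (C : Matrix (Fin 2) (Fin 2) K)) := by
          rw [mul_assoc]
  -- b*c is a nontrivial element of G
  have hbcG : b * c ∈ G := mul_mem hbG hcG
  have hbc1 : b * c ≠ 1 := by
    intro h
    apply hcb
    have hbb := hG b hbG
    calc c = (b * b) * c := by rw [hbb, one_mul]
      _ = b * (b * c) := by rw [mul_assoc]
      _ = b := by rw [h, mul_one]
  have hmkBC : (QuotientGroup.mk (B * C) : PGL2 K) = b * c := by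
    rw [QuotientGroup.mk_mul, hB, hC]
  have htBC := aux_trace_zero (b * c) hbc1 (hG _ hbcG) (B * C) hmkBC
  have htBC' : Matrix.trace ((B : Matrix (Fin 2) (Fin 2) K)
      * (C : Matrix (Fin 2) (Fin 2) K)) = 0 := htBC
  obtain ⟨β, hβ⟩ := aux_commutant h2 (A : Matrix (Fin 2) (Fin 2) K)
    ((B : Matrix (Fin 2) (Fin 2) K) * (C : Matrix (Fin 2) (Fin 2) K)) htA htBC' hA0
    hcommBCA.symm
  have : (QuotientGroup.mk (B * C) : PGL2 K) = QuotientGroup.mk A := by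
    apply aux_mk_eq_of_smul
    exact hβ
  rw [hmkBC, hA] at this
  apply hcab
  have hbb := hG b hbG
  calc c = (b * b) * c := by rw [hbb, one_mul]
    _ = b * (b * c) := by rw [mul_assoc]
    _ = b * a := by rw [this]
    _ = a * b := (habel a haG b hbG).symm

theorem aux_elem_two (H : Type*) [Group H] [Finite H] (h : ∀ x : H, x * x = 1) :
    ∃ r : ℕ, Nat.card H = 2 ^ r ∧ Nonempty (H ≃* (Fin r → Multiplicative (ZMod 2))) := by
  have hcomm : ∀ a b : H, a * b = b * a := by
    intro a b
    have hab := h (a * b)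
    have ha := h a; have hb := h b
    calc a * b = a * ((a*b)*(a*b)) * b := by rw [hab]; group
    _ = (a*a) * (b*a) * (b*b) := by group
    _ = b * a := by rw [ha, hb]; group
  letI : CommGroup H := { (inferInstance : Group H) with mul_comm := hcomm }
  letI : Module (ZMod 2) (Additive H) := AddCommGroup.zmodModule (by
    intro x
    show (2 : ℕ) • x = 0
    have := h (Additive.toMul x)
    rw [two_nsmul]; exact this)
  haveI : Module.Finite (ZMod 2) (Additive H) := Module.Finite.of_finite
  let b := Module.finBasis (ZMod 2) (Additive H)
  refine ⟨Module.finrank (ZMod 2) (Additive H), ?_, ⟨?_⟩⟩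
  · have e1 : H ≃ (Fin (Module.finrank (ZMod 2) (Additive H)) → ZMod 2) :=
      b.equivFun.toEquiv
    rw [Nat.card_congr e1]
    simp [Nat.card_eq_fintype_card]
  · have e1 : H ≃* Multiplicative (Additive H) := MulEquiv.refl _
    have e2 : Multiplicative (Additive H) ≃*
        Multiplicative (Fin (Module.finrank (ZMod 2) (Additive H)) → ZMod 2) :=
      AddEquiv.toMultiplicative b.equivFun.toAddEquiv
    exact e1.trans (e2.trans (MulEquiv.funMultiplicative _ _))

private theorem main_aux {K : Type*} [Field K]
    (h2 : (2 : K) ≠ 0) (G : Subgroup (PGL2 K)) (hfin : Finite G)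
    (hinv : ∀ x ∈ G, x ≠ 1 → orderOf x = 2) :
    ∃ r : ℕ, r ≤ 2 ∧
      Nonempty ((G : Subgroup (PGL2 K)) ≃* (Fin r → Multiplicative (ZMod 2))) := by
  have hG : ∀ x ∈ G, x * x = 1 := by
    intro x hx
    by_cases hx1 : x = 1
    · rw [hx1, one_mul]
    · have := hinv x hx hx1
      have h := pow_orderOf_eq_one x
      rw [this] at h
      rwa [pow_two] at h
  have habel : ∀ x ∈ G, ∀ y ∈ G, x * y = y * x := by
    intro x hx y hy
    have hxy := hG (x * y) (mul_mem hx hy)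
    have hxx := hG x hx; have hyy := hG y hy
    calc x * y = x * ((x*y)*(x*y)) * y := by rw [hxy]; group
    _ = (x*x) * (y*x) * (y*y) := by group
    _ = y * x := by rw [hxx, hyy]; group
  -- cardinality bound
  have hcard : Nat.card G ≤ 4 := by
    by_cases hex : ∃ a ∈ G, ∃ b ∈ G, a ≠ 1 ∧ b ≠ 1 ∧ a ≠ b
    · obtain ⟨a, haG, b, hbG, ha1, hb1, hab⟩ := hex
      have hsub : (G : Set (PGL2 K)) ⊆ {1, a, b, a * b} := by
        intro c hcG
        rcases aux_claim h2 G hG habel a b c haG hbG hcG ha1 hb1 hab with h | h | h | h <;>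
          simp [h]
      calc Nat.card G = (G : Set (PGL2 K)).ncard := Nat.card_coe_set_eq _
        _ ≤ ({1, a, b, a * b} : Set (PGL2 K)).ncard :=
            Set.ncard_le_ncard hsub (Set.toFinite _)
        _ ≤ 4 := by
            apply le_trans (Set.ncard_insert_le _ _)
            have : ({a, b, a*b} : Set (PGL2 K)).ncard ≤ 3 := by
              apply le_trans (Set.ncard_insert_le _ _)
              have : ({b, a*b} : Set (PGL2 K)).ncard ≤ 2 := by
                apply le_trans (Set.ncard_insert_le _ _)
                simp
              omega
            omega
    · push_neg at hex
      by_cases hone : ∃ a ∈ G, a ≠ 1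
      · obtain ⟨a, haG, ha1⟩ := hone
        have hsub : (G : Set (PGL2 K)) ⊆ {1, a} := by
          intro c hcG
          by_cases hc1 : c = 1
          · simp [hc1]
          · have := hex a haG c hcG ha1 hc1
            simp [this]
        calc Nat.card G = (G : Set (PGL2 K)).ncard := Nat.card_coe_set_eq _
          _ ≤ ({1, a} : Set (PGL2 K)).ncard := Set.ncard_le_ncard hsub (Set.toFinite _)
          _ ≤ 4 := by
              apply le_trans (Set.ncard_insert_le _ _)
              simp
      · push_neg at hone
        have hsub : (G : Set (PGL2 K)) ⊆ {1} := fun c hc => hone c hc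
        calc Nat.card G = (G : Set (PGL2 K)).ncard := Nat.card_coe_set_eq _
          _ ≤ ({1} : Set (PGL2 K)).ncard := Set.ncard_le_ncard hsub (Set.toFinite _)
          _ ≤ 4 := by simp
  obtain ⟨r, hr, ⟨e⟩⟩ := aux_elem_two G (by
    intro x
    have := hG x x.2
    ext
    exact_mod_cast this)
  refine ⟨r, ?_, ⟨e⟩⟩
  rw [hr] at hcard
  by_contra hr2
  push_neg at hr2
  have : 2 ^ 3 ≤ 2 ^ r := Nat.pow_le_pow_right (by norm_num) hr2
  omega

end Aux

/-- a finite subgroup of `PGL(2, K)` (char K ≠ 2) all of whose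
non-identity elements have order two is isomorphic to `(ℤ/2ℤ)^r` for some
`r ∈ {0, 1, 2}`. -/
theorem elementary_two_subgroup_rank_le_two {K : Type*} [Field K]
    (h2 : (2 : K) ≠ 0) (G : Subgroup (PGL2 K)) (hfin : Finite G)
    (hinv : ∀ x ∈ G, x ≠ 1 → orderOf x = 2) :
    ∃ r : ℕ, r ≤ 2 ∧
      Nonempty ((G : Subgroup (PGL2 K)) ≃* (Fin r → Multiplicative (ZMod 2))) := by
  exact main_aux h2 G hfin hinv
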